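/- arXiv:1903.09793 — 3 statements merged into one kernel-verified Lean document; each statement's English description precedes it below -/
import Mathlib

section
/- Let T : ℝ^N_+ → ℝ^N_{++} be a continuous SI mapping and let T_∞ be its asymptotic mapping. Then T has a fixed point (i.e., there exists x ∈ ℝ^N_+ with T(x) = x) if and only if ρ(T_∞) < 1. -/
open Filter Topology

namespace Stmt17

structure Pack (N : ℕ) where
  T : (Fin N → ℝ) → (Fin N → ℝ)
  Tinf : (Fin N → ℝ) → (Fin N → ℝ)
  pos : ∀ x, 0 ≤ x → ∀ i, 0 < T x i
  mono : ∀ x y, 0 ≤ x → x ≤ y → T x ≤ T y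
  scal : ∀ x, 0 ≤ x → ∀ α : ℝ, 1 < α → ∀ i, T (α • x) i < α * T x i
  cont : ContinuousOn T {x | 0 ≤ x}
  lim : ∀ x, 0 ≤ x → ∀ i, Tendsto (fun h : ℝ => T (h • x) i / h) atTop (nhds (Tinf x i))

variable {N : ℕ} (P : Pack N)

lemma Pack.div_anti {x : Fin N → ℝ} (hx : 0 ≤ x) {h h' : ℝ} (h0 : 0 < h) (hh : h ≤ h')
    (i : Fin N) : P.T (h' • x) i / h' ≤ P.T (h • x) i / h := by
  rcases eq_or_lt_of_le hh with rfl | hlt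
  · exact le_rfl
  · have h'0 : 0 < h' := h0.trans hlt
    have hα : 1 < h' / h := (one_lt_div h0).2 hlt
    have hs := P.scal (h • x) (smul_nonneg h0.le hx) (h' / h) hα i
    rw [smul_smul, div_mul_cancel₀ _ h0.ne'] at hs
    calc P.T (h' • x) i / h' ≤ ((h' / h) * P.T (h • x) i) / h' := by gcongr
      _ = P.T (h • x) i / h := by field_simp

lemma Pack.tinf_le {x : Fin N → ℝ} (hx : 0 ≤ x) {h : ℝ} (h0 : 0 < h) (i : Fin N) :
    P.Tinf x i ≤ P.T (h • x) i / h :=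
  le_of_tendsto (P.lim x hx i)
    (eventually_atTop.2 ⟨h, fun _ hh' => P.div_anti hx h0 hh' i⟩)

lemma Pack.tinf_nonneg {x : Fin N → ℝ} (hx : 0 ≤ x) : 0 ≤ P.Tinf x := by
  intro i
  refine ge_of_tendsto (P.lim x hx i) (eventually_atTop.2 ⟨1, fun h hh => ?_⟩)
  exact div_nonneg (P.pos _ (smul_nonneg (by linarith) hx) i).le (by linarith)

lemma Pack.tinf_mono {x y : Fin N → ℝ} (hx : 0 ≤ x) (hxy : x ≤ y) :
    P.Tinf x ≤ P.Tinf y := by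
  intro i
  refine le_of_tendsto_of_tendsto (P.lim x hx i) (P.lim y (hx.trans hxy) i)
    (eventually_atTop.2 ⟨1, fun h hh => ?_⟩)
  have h0 : (0:ℝ) < h := by linarith
  have hm := P.mono (h • x) (h • y) (smul_nonneg h0.le hx)
    (smul_le_smul_of_nonneg_left hxy h0.le) i
  exact (div_le_div_iff_of_pos_right h0).2 hm

lemma Pack.tinf_smul {c : ℝ} (hc : 0 ≤ c) {x : Fin N → ℝ} (hx : 0 ≤ x) :
    P.Tinf (c • x) = c • P.Tinf x := by
  rcases hc.eq_or_lt with rfl | hc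
  · have hz : P.Tinf ((0:ℝ) • x) = 0 := by
      funext i
      refine tendsto_nhds_unique (P.lim ((0:ℝ) • x) (by simp) i) ?_
      have he : (fun h : ℝ => P.T (h • ((0:ℝ) • x)) i / h) = fun h => P.T 0 i / h := by
        funext h; rw [zero_smul, smul_zero]
      rw [he]
      simpa using tendsto_const_nhds.div_atTop (tendsto_id (α := ℝ))
    rw [hz, zero_smul]
  · funext i
    refine tendsto_nhds_unique (P.lim (c • x) (smul_nonneg hc.le hx) i) ?_
    have h1 : Tendsto (fun h : ℝ => P.T ((h * c) • x) i / (h * c)) atTop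
        (𝓝 (P.Tinf x i)) :=
      (P.lim x hx i).comp (Tendsto.atTop_mul_const hc tendsto_id)
    have h2 := h1.const_mul c
    have he : (fun h : ℝ => c * (P.T ((h * c) • x) i / (h * c))) =ᶠ[atTop]
        (fun h : ℝ => P.T (h • (c • x)) i / h) := by
      filter_upwards [eventually_gt_atTop 0] with h hh
      rw [smul_smul]
      field_simp
    simpa [Pi.smul_apply, smul_eq_mul] using h2.congr' he

/-- max coordinate -/
def mx (hN : 0 < N) (x : Fin N → ℝ) : ℝ :=
  Finset.univ.sup' (Finset.univ_nonempty_iff.2 (Fin.pos_iff_nonempty.1 hN)) x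

variable {hN : 0 < N}

lemma le_mx (x : Fin N → ℝ) (i : Fin N) : x i ≤ mx hN x :=
  Finset.le_sup' x (Finset.mem_univ i)

lemma mx_le {x : Fin N → ℝ} {a : ℝ} (h : ∀ i, x i ≤ a) : mx hN x ≤ a :=
  Finset.sup'_le _ _ fun i _ => h i

lemma exists_mx (x : Fin N → ℝ) : ∃ i, mx hN x = x i := by
  obtain ⟨i, -, hi⟩ := Finset.exists_mem_eq_sup' _ x
  exact ⟨i, hi⟩

lemma mx_nonneg {x : Fin N → ℝ} (hx : 0 ≤ x) : 0 ≤ mx hN x := by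
  obtain ⟨i⟩ := Fin.pos_iff_nonempty.1 hN
  exact le_trans (hx i) (le_mx x i)

lemma mx_smul {c : ℝ} (hc : 0 ≤ c) (x : Fin N → ℝ) :
    mx hN (c • x) = c * mx hN x := by
  refine le_antisymm (mx_le fun i => ?_) ?_
  · have : x i ≤ mx hN x := le_mx x i
    simpa [Pi.smul_apply, smul_eq_mul] using mul_le_mul_of_nonneg_left this hc
  · obtain ⟨i, hi⟩ := exists_mx (hN := hN) x
    rw [hi]
    have : (c • x) i ≤ mx hN (c • x) := le_mx _ i
    simpa [Pi.smul_apply, smul_eq_mul] using this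

lemma norm_eq_mx {x : Fin N → ℝ} (hx : 0 ≤ x) : ‖x‖ = mx hN x := by
  refine le_antisymm ((pi_norm_le_iff_of_nonneg (mx_nonneg hx)).2 fun i => ?_) ?_
  · rw [Real.norm_eq_abs, abs_of_nonneg (hx i)]; exact le_mx x i
  · obtain ⟨i, hi⟩ := exists_mx (hN := hN) x
    rw [hi]
    exact le_trans (le_abs_self _) (norm_le_pi_norm x i)

/-- Every additively homogeneous, sup-nonexpansive map with bounded displacement
from the max functional has an additive eigenvector. -/
lemma topical_eigen (hN : 0 < N) (F : (Fin N → ℝ) → (Fin N → ℝ))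
    (h1 : ∀ u v, dist (F u) (F v) ≤ dist u v)
    (h2 : ∀ u (c : ℝ) i, F (fun j => u j + c) i = F u i + c)
    {C : ℝ} (hC : 0 ≤ C) (h3 : ∀ u i, |F u i - mx hN u| ≤ C) :
    ∃ (v : Fin N → ℝ) (c : ℝ), ∀ i, F v i = v i + c := by
  haveI : Nonempty (Fin N) := Fin.pos_iff_nonempty.1 hN
  obtain ⟨i₀⟩ := (inferInstance : Nonempty (Fin N))
  -- the contraction parameters
  set tn : ℕ → ℝ := fun n => 1 - 1 / (n + 2) with htn
  have htn_pos : ∀ n, 0 < tn n := by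
    intro n
    have h2n : (2:ℝ) ≤ (n:ℝ) + 2 := by
      have : (0:ℝ) ≤ (n:ℝ) := Nat.cast_nonneg n
      linarith
    have : 1 / ((n:ℝ) + 2) ≤ 1 / 2 := by
      apply one_div_le_one_div_of_le <;> linarith
    simp only [htn]; linarith
  have htn_lt : ∀ n, tn n < 1 := by
    intro n
    have : 0 < 1 / ((n:ℝ) + 2) := by positivity
    simp only [htn]; linarith
  have htn_lim : Tendsto tn atTop (𝓝 1) := by
    have : Tendsto (fun n : ℕ => 1 / ((n:ℝ) + 2)) atTop (𝓝 0) := by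
      apply Tendsto.div_atTop tendsto_const_nhds
      exact tendsto_atTop_add_const_right atTop 2 tendsto_natCast_atTop_atTop
    simpa [htn] using (tendsto_const_nhds (x := (1:ℝ))).sub this
  -- Lipschitz of F
  have hFlip : LipschitzWith 1 F := by
    refine LipschitzWith.of_dist_le_mul fun u v => ?_
    simpa using h1 u v
  -- fixed points of the contractions
  clear_value tn
  clear htn
  have key : ∀ n, ∃ u : Fin N → ℝ, u = tn n • F u := by
    intro n
    have hlip : LipschitzWith ⟨tn n, (htn_pos n).le⟩ (fun u => tn n • F u) := by
      refine LipschitzWith.of_dist_le_mul fun u v => ?_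
      rw [dist_smul₀]
      have : ‖tn n‖ = tn n := by
        rw [Real.norm_eq_abs, abs_of_pos (htn_pos n)]
      rw [this]
      exact mul_le_mul_of_nonneg_left (h1 u v) (htn_pos n).le
    have hcw : ContractingWith ⟨tn n, (htn_pos n).le⟩ (fun u => tn n • F u) :=
      ⟨by exact_mod_cast htn_lt n, hlip⟩
    exact ⟨hcw.fixedPoint _, (hcw.fixedPoint_isFixedPt).symm⟩
  choose u hu using key
  set a : ℕ → ℝ := fun n => mx hN (u n) with ha
  set b : ℕ → ℝ := fun n => mx hN (F (u n)) with hb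
  have hab : ∀ n, a n = tn n * b n := by
    intro n
    show mx hN (u n) = tn n * mx hN (F (u n))
    conv_lhs => rw [hu n]
    exact mx_smul (htn_pos n).le _
  have hba : ∀ n, |b n - a n| ≤ C := by
    intro n
    rw [abs_le]
    constructor
    · have h := h3 (u n) i₀
      rw [abs_le] at h
      have : F (u n) i₀ ≤ b n := le_mx _ i₀
      linarith
    · obtain ⟨i, hi⟩ := exists_mx (hN := hN) (F (u n))
      have h := h3 (u n) i
      rw [abs_le] at h
      linarith
  set c : ℕ → ℝ := fun n => b n - a n with hc
  set v : ℕ → Fin N → ℝ := fun n j => u n j - a n with hv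
  have hvb : ∀ n j, |v n j| ≤ 2 * C := by
    intro n j
    have h4 : v n j = tn n * (F (u n) j - b n) := by
      simp only [hv]
      conv_lhs => rw [hu n]
      simp only [Pi.smul_apply, smul_eq_mul, hab n]
      ring
    rw [h4, abs_mul, abs_of_pos (htn_pos n)]
    have h5 : |F (u n) j - b n| ≤ 2 * C := by
      have h6 := h3 (u n) j
      have h7 := hba n
      calc |F (u n) j - b n| = |(F (u n) j - a n) - (b n - a n)| := by ring_nf
        _ ≤ |F (u n) j - a n| + |b n - a n| := abs_sub _ _
        _ ≤ C + C := add_le_add h6 h7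
        _ = 2 * C := by ring
    calc tn n * |F (u n) j - b n| ≤ 1 * |F (u n) j - b n| :=
          mul_le_mul_of_nonneg_right (htn_lt n).le (abs_nonneg _)
      _ ≤ 2 * C := by rw [one_mul]; exact h5
  have hiden : ∀ n i, F (v n) i = v n i / tn n + c n := by
    intro n i
    have e1 : F (v n) i = F (u n) i - a n := by
      have : v n = fun j => u n j + (-(a n)) := by
        funext j; simp [hv, sub_eq_add_neg]
      rw [this, h2]
      ring
    have e2 : F (u n) i = u n i / tn n := by
      conv_rhs => rw [hu n]
      simp only [Pi.smul_apply, smul_eq_mul]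
      field_simp [(htn_pos n).ne']
    rw [e1, e2]
    have e3 : v n i = u n i - a n := rfl
    have e4 : c n = b n - a n := rfl
    have ht := (htn_pos n).ne'
    rw [e3, e4]
    field_simp
    linear_combination hab n
  -- compactness
  set K : Set ((Fin N → ℝ) × ℝ) :=
    (Set.Icc (fun _ => -(2*C)) (fun _ => 2*C)) ×ˢ (Set.Icc (-C) C) with hK
  have hKcomp : IsCompact K := (isCompact_Icc).prod isCompact_Icc
  have hqmem : ∀ n, (v n, c n) ∈ K := by
    intro n
    constructor
    · constructor
      · intro j; have := hvb n j; rw [abs_le] at this; exact this.1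
      · intro j; have := hvb n j; rw [abs_le] at this; exact this.2
    · have := hba n; rw [abs_le] at this; exact this
  obtain ⟨⟨vL, cL⟩, -, φ, hφ, hconv⟩ := hKcomp.tendsto_subseq hqmem
  have hvconv : Tendsto (fun k => v (φ k)) atTop (𝓝 vL) :=
    (continuous_fst.tendsto _).comp hconv
  have hcconv : Tendsto (fun k => c (φ k)) atTop (𝓝 cL) :=
    (continuous_snd.tendsto _).comp hconv
  have htconv : Tendsto (fun k => tn (φ k)) atTop (𝓝 1) :=
    htn_lim.comp hφ.tendsto_atTop
  refine ⟨vL, cL, fun i => ?_⟩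
  have hL : Tendsto (fun k => F (v (φ k)) i) atTop (𝓝 (F vL i)) :=
    (((continuous_apply i).comp hFlip.continuous).tendsto _).comp hvconv
  have hR : Tendsto (fun k => v (φ k) i / tn (φ k) + c (φ k)) atTop (𝓝 (vL i / 1 + cL)) := by
    refine Tendsto.add (Tendsto.div ?_ htconv one_ne_zero) hcconv
    exact ((continuous_apply i).tendsto _).comp hvconv
  have : F vL i = vL i / 1 + cL := by
    refine tendsto_nhds_unique hL ?_
    refine hR.congr fun k => ?_
    exact (hiden (φ k) i).symm
  rw [this]; ring

lemma exists_perturbed_eigen (hN : 0 < N) (G : (Fin N → ℝ) → (Fin N → ℝ))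
    (hGn : ∀ x, 0 ≤ x → 0 ≤ G x)
    (hGm : ∀ x y, 0 ≤ x → x ≤ y → G x ≤ G y)
    (hGh : ∀ (c : ℝ), 0 ≤ c → ∀ x, 0 ≤ x → G (c • x) = c • G x)
    {δ : ℝ} (hδ : 0 < δ) :
    ∃ (x : Fin N → ℝ) (lam : ℝ), (∀ i, 0 < x i) ∧ 0 < lam ∧
      ∀ i, G x i + δ * mx hN x = lam * x i := by
  haveI : Nonempty (Fin N) := Fin.pos_iff_nonempty.1 hN
  have hone0 : (0:Fin N → ℝ) ≤ (fun _ => 1) := fun i => zero_le_one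
  set M : ℝ := mx hN (G (fun _ => 1)) with hM
  have hM0 : 0 ≤ M := mx_nonneg (hGn _ hone0)
  set E : (Fin N → ℝ) → (Fin N → ℝ) := fun u j => Real.exp (u j) with hE
  have hE0 : ∀ u, (0:Fin N → ℝ) ≤ E u := fun u j => (Real.exp_pos _).le
  have hmxE : ∀ u, mx hN (E u) = Real.exp (mx hN u) := by
    intro u
    refine le_antisymm (mx_le fun j => Real.exp_le_exp.2 (le_mx u j)) ?_
    obtain ⟨j, hj⟩ := exists_mx (hN := hN) u
    rw [hj]
    exact le_mx (E u) j
  have hSpos : ∀ u i, 0 < G (E u) i + δ * mx hN (E u) := by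
    intro u i
    have h1 : 0 ≤ G (E u) i := hGn (E u) (hE0 u) i
    have h2 : 0 < mx hN (E u) := by rw [hmxE]; exact Real.exp_pos _
    nlinarith
  set F : (Fin N → ℝ) → (Fin N → ℝ) :=
    fun u i => Real.log (G (E u) i + δ * mx hN (E u)) with hF
  -- scaling of the perturbed map
  have hSh : ∀ (c : ℝ), 0 ≤ c → ∀ x, 0 ≤ x → ∀ i,
      G (c • x) i + δ * mx hN (c • x) = c * (G x i + δ * mx hN x) := by
    intro c hc x hx i
    rw [hGh c hc x hx, mx_smul hc]
    simp only [Pi.smul_apply, smul_eq_mul]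
    ring
  -- order nonexpansiveness
  have hkey : ∀ u v (d : ℝ), (∀ j, u j ≤ v j + d) → ∀ i, F u i ≤ F v i + d := by
    intro u v d hle i
    have hle' : E u ≤ Real.exp d • E v := by
      intro j
      have := Real.exp_le_exp.2 (hle j)
      rw [Real.exp_add] at this
      simpa [hE, Pi.smul_apply, smul_eq_mul, mul_comm] using this
    have hG : G (E u) i ≤ Real.exp d * G (E v) i := by
      have h1 := hGm (E u) (Real.exp d • E v) (hE0 u) hle' i
      rw [hGh _ (Real.exp_pos d).le _ (hE0 v)] at h1
      simpa [Pi.smul_apply, smul_eq_mul] using h1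
    have hmx : mx hN (E u) ≤ Real.exp d * mx hN (E v) := by
      refine mx_le fun j => (hle' j).trans ?_
      have : E v j ≤ mx hN (E v) := le_mx _ j
      simpa [Pi.smul_apply, smul_eq_mul] using
        mul_le_mul_of_nonneg_left this (Real.exp_pos d).le
    have hSle : G (E u) i + δ * mx hN (E u) ≤
        Real.exp d * (G (E v) i + δ * mx hN (E v)) := by nlinarith
    show Real.log _ ≤ Real.log _ + d
    calc Real.log (G (E u) i + δ * mx hN (E u))
        ≤ Real.log (Real.exp d * (G (E v) i + δ * mx hN (E v))) :=
          (Real.log_le_log_iff (hSpos u i) (mul_pos (Real.exp_pos d) (hSpos v i))).2 hSle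
      _ = Real.log (G (E v) i + δ * mx hN (E v)) + d := by
          rw [Real.log_mul (Real.exp_ne_zero d) (hSpos v i).ne', Real.log_exp]; ring
  have h1 : ∀ u v, dist (F u) (F v) ≤ dist u v := by
    intro u v
    rw [dist_pi_le_iff dist_nonneg]
    intro i
    rw [Real.dist_eq, abs_le]
    have hd1 : ∀ j, u j ≤ v j + dist u v := by
      intro j
      have : dist (u j) (v j) ≤ dist u v := dist_le_pi_dist u v j
      rw [Real.dist_eq, abs_le] at this
      linarith [this.1, this.2]
    have hd2 : ∀ j, v j ≤ u j + dist u v := by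
      intro j
      have : dist (u j) (v j) ≤ dist u v := dist_le_pi_dist u v j
      rw [Real.dist_eq, abs_le] at this
      linarith [this.1, this.2]
    exact ⟨by linarith [hkey v u (dist u v) hd2 i], by linarith [hkey u v (dist u v) hd1 i]⟩
  have h2 : ∀ u (c : ℝ) i, F (fun j => u j + c) i = F u i + c := by
    intro u c i
    have hEe : E (fun j => u j + c) = Real.exp c • E u := by
      funext j
      simp [hE, Real.exp_add, Pi.smul_apply, smul_eq_mul, mul_comm]
    show Real.log (G (E fun j => u j + c) i + δ * mx hN (E fun j => u j + c)) = _ + c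
    rw [hEe, hSh (Real.exp c) (Real.exp_pos c).le (E u) (hE0 u) i,
      Real.log_mul (Real.exp_ne_zero c) (hSpos u i).ne', Real.log_exp]
    ring
  -- displacement bounds
  have hlow : ∀ u i, mx hN u + Real.log δ ≤ F u i := by
    intro u i
    have hG : 0 ≤ G (E u) i := hGn (E u) (hE0 u) i
    have : δ * Real.exp (mx hN u) ≤ G (E u) i + δ * mx hN (E u) := by
      rw [hmxE]; nlinarith [Real.exp_pos (mx hN u)]
    calc mx hN u + Real.log δ = Real.log (δ * Real.exp (mx hN u)) := by
          rw [Real.log_mul hδ.ne' (Real.exp_ne_zero _), Real.log_exp]; ring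
      _ ≤ F u i := (Real.log_le_log_iff (by positivity) (hSpos u i)).2 this
  have hup : ∀ u i, F u i ≤ mx hN u + Real.log (M + δ) := by
    intro u i
    have hle' : E u ≤ Real.exp (mx hN u) • (fun _ => (1:ℝ)) := by
      intro j
      have := Real.exp_le_exp.2 (le_mx (hN := hN) u j)
      simpa [hE, Pi.smul_apply, smul_eq_mul] using this
    have hG : G (E u) i ≤ Real.exp (mx hN u) * M := by
      have hg1 := hGm (E u) _ (hE0 u) hle' i
      rw [hGh _ (Real.exp_pos _).le _ hone0] at hg1
      have hg2 : G (fun _ => (1:ℝ)) i ≤ M := le_mx _ i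
      simp only [Pi.smul_apply, smul_eq_mul] at hg1
      nlinarith [Real.exp_pos (mx hN u)]
    have hS : G (E u) i + δ * mx hN (E u) ≤ (M + δ) * Real.exp (mx hN u) := by
      rw [hmxE]; nlinarith
    calc F u i ≤ Real.log ((M + δ) * Real.exp (mx hN u)) :=
          (Real.log_le_log_iff (hSpos u i) (by positivity)).2 hS
      _ = mx hN u + Real.log (M + δ) := by
          rw [Real.log_mul (by positivity) (Real.exp_ne_zero _), Real.log_exp]; ring
  set C : ℝ := max |Real.log δ| |Real.log (M + δ)| with hC
  have hC0 : 0 ≤ C := le_trans (abs_nonneg _) (le_max_left _ _)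
  have h3 : ∀ u i, |F u i - mx hN u| ≤ C := by
    intro u i
    rw [abs_le]
    constructor
    · have := hlow u i
      have h4 : -C ≤ Real.log δ := by
        have : |Real.log δ| ≤ C := le_max_left _ _
        rw [abs_le] at this; linarith [this.1]
      linarith
    · have := hup u i
      have h4 : Real.log (M + δ) ≤ C := le_trans (le_abs_self _) (le_max_right _ _)
      linarith
  obtain ⟨v, c, hvc⟩ := topical_eigen hN F h1 h2 hC0 h3
  refine ⟨E v, Real.exp c, fun i => Real.exp_pos _, Real.exp_pos _, fun i => ?_⟩
  have := hvc i
  have h5 : G (E v) i + δ * mx hN (E v) = Real.exp (v i + c) := by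
    rw [← this]
    exact (Real.exp_log (hSpos v i)).symm
  rw [h5, Real.exp_add]
  show Real.exp (v i) * Real.exp c = Real.exp c * Real.exp (v i)
  ring

lemma Pack.exists_pos {z : Fin N → ℝ} (hz0 : 0 ≤ z) (hzne : z ≠ 0) : ∃ j, 0 < z j := by
  by_contra h
  push_neg at h
  exact hzne (funext fun j => le_antisymm (h j) (hz0 j))

lemma Pack.bddS (hN : 0 < N) {μ : ℝ} (hμ : 0 ≤ μ) {z : Fin N → ℝ} (hz0 : 0 ≤ z)
    (hzne : z ≠ 0) (heig : P.Tinf z = μ • z) :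
    μ ≤ mx hN (P.Tinf fun _ => (1:ℝ)) := by
  obtain ⟨j, hj⟩ := Pack.exists_pos hz0 hzne
  obtain ⟨i, hi⟩ := exists_mx (hN := hN) z
  have hmz : 0 < mx hN z := lt_of_lt_of_le hj (le_mx z j)
  have hone : (0:Fin N → ℝ) ≤ fun _ => (1:ℝ) := fun _ => zero_le_one
  have hle : z ≤ mx hN z • (fun _ => (1:ℝ)) := by
    intro k
    simpa [Pi.smul_apply, smul_eq_mul] using le_mx (hN := hN) z k
  have h1 : P.Tinf z i ≤ mx hN z * P.Tinf (fun _ => (1:ℝ)) i := by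
    have := P.tinf_mono hz0 hle i
    rwa [P.tinf_smul hmz.le hone, Pi.smul_apply, smul_eq_mul] at this
  have h2 : P.Tinf (fun _ => (1:ℝ)) i ≤ mx hN (P.Tinf fun _ => (1:ℝ)) := le_mx _ i
  have h3 : μ * mx hN z ≤ mx hN z * mx hN (P.Tinf fun _ => (1:ℝ)) := by
    have h4 : P.Tinf z i = μ * z i := by rw [heig]; simp
    rw [← hi] at h4
    nlinarith
  have := mul_le_mul_of_nonneg_left h2 hmz.le
  nlinarith

lemma Pack.forward (hN : 0 < N) {xs : Fin N → ℝ} (hxs0 : 0 ≤ xs) (hfix : P.T xs = xs) :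
    sSup {μ : ℝ | 0 ≤ μ ∧ ∃ x : Fin N → ℝ, 0 ≤ x ∧ x ≠ 0 ∧ P.Tinf x = μ • x} < 1 := by
  haveI : Nonempty (Fin N) := Fin.pos_iff_nonempty.1 hN
  obtain ⟨i₀⟩ := (inferInstance : Nonempty (Fin N))
  have hxp : ∀ i, 0 < xs i := by
    intro i; rw [← hfix]; exact P.pos xs hxs0 i
  have hTi : ∀ i, P.Tinf xs i < xs i := by
    intro i
    have h1 : P.Tinf xs i ≤ P.T ((2:ℝ) • xs) i / 2 := P.tinf_le hxs0 two_pos i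
    have h2 : P.T ((2:ℝ) • xs) i < 2 * P.T xs i := P.scal xs hxs0 2 one_lt_two i
    have h3 : P.T xs i = xs i := by rw [hfix]
    linarith
  set θ : ℝ := mx hN (fun i => P.Tinf xs i / xs i) with hθ
  have hθ1 : θ < 1 := by
    obtain ⟨i, hi⟩ := exists_mx (hN := hN) (fun i => P.Tinf xs i / xs i)
    rw [hθ, hi]
    exact (div_lt_one (hxp i)).2 (hTi i)
  have hθ0 : 0 ≤ θ := by
    have h1 : 0 ≤ P.Tinf xs i₀ / xs i₀ :=
      div_nonneg (P.tinf_nonneg hxs0 i₀) (hxp i₀).le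
    rw [hθ]
    exact le_trans h1 (le_mx (fun i => P.Tinf xs i / xs i) i₀)
  have hbound : ∀ μ ∈ {μ : ℝ | 0 ≤ μ ∧ ∃ x : Fin N → ℝ, 0 ≤ x ∧ x ≠ 0 ∧ P.Tinf x = μ • x},
      μ ≤ θ := by
    rintro μ ⟨hμ0, y, hy0, hyne, heig⟩
    obtain ⟨j, hj⟩ := Pack.exists_pos hy0 hyne
    obtain ⟨i, hi⟩ := exists_mx (hN := hN) (fun k => y k / xs k)
    set c : ℝ := mx hN (fun k => y k / xs k) with hcdef
    have hc0 : 0 < c := by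
      have h0 : 0 < y j / xs j := div_pos hj (hxp j)
      rw [hcdef]
      exact lt_of_lt_of_le h0 (le_mx (fun k => y k / xs k) j)
    have hyc : y ≤ c • xs := by
      intro k
      have h1 : y k / xs k ≤ c := by rw [hcdef]; exact le_mx (fun k => y k / xs k) k
      rw [Pi.smul_apply, smul_eq_mul]
      exact (div_le_iff₀ (hxp k)).1 h1
    have hyi : y i = c * xs i := by
      have : c = y i / xs i := hi
      rw [this, div_mul_cancel₀ _ (hxp i).ne']
    have h1 : P.Tinf y i ≤ c * P.Tinf xs i := by
      have := P.tinf_mono hy0 hyc i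
      rwa [P.tinf_smul hc0.le hxs0, Pi.smul_apply, smul_eq_mul] at this
    have h2 : P.Tinf xs i ≤ θ * xs i := by
      have h3 : P.Tinf xs i / xs i ≤ θ := by rw [hθ]; exact le_mx (fun i => P.Tinf xs i / xs i) i
      exact (div_le_iff₀ (hxp i)).1 h3
    have h4 : P.Tinf y i = μ * y i := by rw [heig]; simp
    have hyipos : 0 < y i := by rw [hyi]; exact mul_pos hc0 (hxp i)
    have : μ * y i ≤ θ * y i := by
      rw [hyi]
      nlinarith
    nlinarith
  exact lt_of_le_of_lt (Real.sSup_le hbound hθ0) hθ1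

lemma Pack.iter_nonneg : ∀ k, (0:Fin N → ℝ) ≤ (P.T)^[k] 0 := by
  intro k
  induction k with
  | zero => simp
  | succ k ih =>
    rw [Function.iterate_succ_apply']
    exact fun i => (P.pos _ ih i).le

lemma Pack.iter_mono : Monotone fun k => (P.T)^[k] (0:Fin N → ℝ) := by
  apply monotone_nat_of_le_succ
  intro k
  induction k with
  | zero => exact fun i => by simpa using (P.pos 0 le_rfl i).le
  | succ k ih =>
    rw [Function.iterate_succ_apply', Function.iterate_succ_apply']
    exact P.mono _ _ (P.iter_nonneg k) ih

lemma Pack.fixed_of_bounded {B : ℝ} (hB : ∀ k i, (P.T)^[k] (0:Fin N → ℝ) i ≤ B) :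
    ∃ x : Fin N → ℝ, 0 ≤ x ∧ P.T x = x := by
  set x : ℕ → Fin N → ℝ := fun k => (P.T)^[k] 0 with hx
  have hmono' : ∀ i, Monotone fun k => x k i := fun i a b hab => P.iter_mono hab i
  have hbdd : ∀ i, BddAbove (Set.range fun k => x k i) := by
    intro i
    exact ⟨B, by rintro r ⟨k, rfl⟩; exact hB k i⟩
  set xs : Fin N → ℝ := fun i => ⨆ k, x k i with hxs
  have htend : Tendsto x atTop (𝓝 xs) :=
    tendsto_pi_nhds.2 fun i => tendsto_atTop_ciSup (hmono' i) (hbdd i)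
  have hxs0 : 0 ≤ xs := by
    intro i
    have := le_ciSup (hbdd i) 0
    simpa [hx] using this
  refine ⟨xs, hxs0, ?_⟩
  have h1 : Tendsto (fun k => P.T (x k)) atTop (𝓝 (P.T xs)) := by
    have hcw : ContinuousWithinAt P.T {x : Fin N → ℝ | 0 ≤ x} xs := P.cont xs hxs0
    exact hcw.tendsto.comp
      (tendsto_nhdsWithin_iff.2 ⟨htend, Eventually.of_forall fun k => P.iter_nonneg k⟩)
  have h2 : Tendsto (fun k => P.T (x k)) atTop (𝓝 xs) := by
    have h3 : (fun k => P.T (x k)) = fun k => x (k + 1) := by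
      funext k
      rw [hx]
      exact (Function.iterate_succ_apply' P.T k 0).symm
    rw [h3]
    exact htend.comp (tendsto_add_atTop_nat 1)
  exact tendsto_nhds_unique h1 h2

lemma Pack.subeig_of_unbounded (hN : 0 < N)
    (hub : ∀ B : ℝ, ∃ k i, B < (P.T)^[k] (0:Fin N → ℝ) i) :
    ∃ y : Fin N → ℝ, 0 ≤ y ∧ y ≠ 0 ∧ y ≤ P.Tinf y := by
  haveI : Nonempty (Fin N) := Fin.pos_iff_nonempty.1 hN
  obtain ⟨i₀⟩ := (inferInstance : Nonempty (Fin N))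
  set H : ℕ → ℝ := fun k => mx hN ((P.T)^[k+1] (0:Fin N → ℝ)) with hHdef
  have hHpos : ∀ k, 0 < H k := by
    intro k
    have h1 : 0 < (P.T)^[1] (0:Fin N → ℝ) i₀ := by
      have he : (P.T)^[1] (0:Fin N → ℝ) = P.T 0 := by simp
      rw [he]; exact P.pos 0 le_rfl i₀
    have h2 : (P.T)^[1] (0:Fin N → ℝ) i₀ ≤ (P.T)^[k+1] (0:Fin N → ℝ) i₀ :=
      P.iter_mono (by omega) i₀
    exact lt_of_lt_of_le h1 (le_trans h2 (le_mx _ i₀))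
  have hHtop : Tendsto H atTop atTop := by
    apply tendsto_atTop_atTop_of_monotone
    · intro a b hab
      exact mx_le fun i => le_trans (P.iter_mono (by omega : a+1 ≤ b+1) i) (le_mx _ i)
    · intro B
      obtain ⟨k, i, hki⟩ := hub B
      refine ⟨k, ?_⟩
      have h2 : (P.T)^[k] (0:Fin N → ℝ) i ≤ (P.T)^[k+1] (0:Fin N → ℝ) i :=
        P.iter_mono (by omega) i
      have h3 : (P.T)^[k+1] (0:Fin N → ℝ) i ≤ H k := le_mx _ i
      linarith
  set Y : ℕ → Fin N → ℝ := fun k => (H k)⁻¹ • (P.T)^[k+1] (0:Fin N → ℝ) with hYdef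
  have hY0 : ∀ k, (0:Fin N → ℝ) ≤ Y k := by
    intro k j
    exact mul_nonneg (inv_nonneg.2 (hHpos k).le) (P.iter_nonneg (k+1) j)
  have hYeq : ∀ k j, (P.T)^[k+1] (0:Fin N → ℝ) j = H k * Y k j := by
    intro k j
    show _ = H k * ((H k)⁻¹ * _)
    rw [← mul_assoc, mul_inv_cancel₀ (hHpos k).ne', one_mul]
  have hYmem : ∀ k, Y k ∈ Set.Icc (0:Fin N → ℝ) (fun _ => (1:ℝ)) := by
    intro k
    refine ⟨hY0 k, fun j => ?_⟩
    show (H k)⁻¹ * _ ≤ 1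
    rw [inv_mul_le_iff₀ (hHpos k), mul_one]
    exact le_mx _ j
  have hmxY : ∀ k, mx hN (Y k) = 1 := by
    intro k
    show mx hN ((H k)⁻¹ • _) = 1
    rw [mx_smul (inv_nonneg.2 (hHpos k).le)]
    exact inv_mul_cancel₀ (hHpos k).ne'
  have hYnorm : ∀ k, ‖Y k‖ = 1 := by
    intro k
    rw [norm_eq_mx (hN := hN) (hY0 k), hmxY]
  obtain ⟨y, hymem, φ, hφ, hconv⟩ := (isCompact_Icc).tendsto_subseq hYmem
  have hy0 : 0 ≤ y := hymem.1
  have hynorm : ‖y‖ = 1 := by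
    have h1 : Tendsto (fun k => ‖Y (φ k)‖) atTop (𝓝 ‖y‖) :=
      (continuous_norm.tendsto y).comp hconv
    have h2 : (fun k => ‖Y (φ k)‖) = fun _ => (1:ℝ) := funext fun k => hYnorm _
    rw [h2] at h1
    exact (tendsto_nhds_unique h1 tendsto_const_nhds)
  have hyne : y ≠ 0 := by
    intro h
    rw [h, norm_zero] at hynorm
    norm_num at hynorm
  have hA : ∀ ε : ℝ, 0 < ε → ∀ i, y i ≤ P.Tinf (fun j => y j + ε) i := by
    intro ε hε i
    have hw0 : (0:Fin N → ℝ) ≤ fun j => y j + ε := by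
      intro j
      have hyj : (0:ℝ) ≤ y j := hy0 j
      show (0:ℝ) ≤ y j + ε
      linarith
    have hev : ∀ᶠ k in atTop,
        Y (φ k) i ≤ P.T (H (φ k) • fun j => y j + ε) i / H (φ k) := by
      obtain ⟨K, hK⟩ := Metric.tendsto_atTop.1 hconv ε hε
      refine eventually_atTop.2 ⟨K, fun k hk => ?_⟩
      have hdist := hK k hk
      have hle : (P.T)^[φ k + 1] (0:Fin N → ℝ) ≤ H (φ k) • fun j => y j + ε := by
        intro j
        have h1 : dist (Y (φ k) j) (y j) ≤ dist (Y (φ k)) y := dist_le_pi_dist _ _ j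
        rw [Real.dist_eq, abs_le] at h1
        have h2 : Y (φ k) j ≤ y j + ε := by
          have := h1.2
          linarith [lt_of_le_of_lt (le_refl (dist (Y (φ k)) y)) hdist]
        rw [Pi.smul_apply, smul_eq_mul, hYeq]
        exact mul_le_mul_of_nonneg_left h2 (hHpos _).le
      have h4 : (P.T)^[φ k + 1] (0:Fin N → ℝ) i ≤
          P.T (H (φ k) • fun j => y j + ε) i := by
        calc (P.T)^[φ k + 1] (0:Fin N → ℝ) i ≤ (P.T)^[φ k + 2] (0:Fin N → ℝ) i :=
              P.iter_mono (by omega) i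
          _ = P.T ((P.T)^[φ k + 1] (0:Fin N → ℝ)) i := by
              rw [Function.iterate_succ_apply' P.T (φ k + 1) 0]
          _ ≤ _ := P.mono _ _ (P.iter_nonneg _) hle i
      rw [le_div_iff₀ (hHpos (φ k))]
      calc Y (φ k) i * H (φ k) = (P.T)^[φ k + 1] (0:Fin N → ℝ) i := by
            rw [hYeq]; ring
        _ ≤ _ := h4
    have hL : Tendsto (fun k => Y (φ k) i) atTop (𝓝 (y i)) :=
      ((continuous_apply i).tendsto y).comp hconv
    have hR : Tendsto (fun k => P.T (H (φ k) • fun j => y j + ε) i / H (φ k)) atTop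
        (𝓝 (P.Tinf (fun j => y j + ε) i)) :=
      (P.lim _ hw0 i).comp (hHtop.comp hφ.tendsto_atTop)
    exact le_of_tendsto_of_tendsto hL hR hev
  have hB : ∀ h : ℝ, 0 < h → ∀ i, y i ≤ P.T (h • y) i / h := by
    intro h hh i
    have harg : Tendsto (fun m : ℕ => h • fun j => y j + 1/((m:ℝ)+1)) atTop (𝓝 (h • y)) := by
      rw [tendsto_pi_nhds]
      intro j
      have h1 : Tendsto (fun m : ℕ => 1/((m:ℝ)+1)) atTop (𝓝 0) :=
        tendsto_one_div_add_atTop_nhds_zero_nat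
      have h2 : Tendsto (fun m : ℕ => y j + 1/((m:ℝ)+1)) atTop (𝓝 (y j)) := by
        simpa using tendsto_const_nhds.add h1
      have h3 := h2.const_mul h
      simp only [Pi.smul_apply, smul_eq_mul]
      simpa using h3
    have hargmem : ∀ m : ℕ, (h • fun j => y j + 1/((m:ℝ)+1)) ∈ {x : Fin N → ℝ | 0 ≤ x} := by
      intro m j
      have h5 : (0:ℝ) ≤ y j := hy0 j
      have h6 : (0:ℝ) < 1/((m:ℝ)+1) := by positivity
      show (0:ℝ) ≤ h * (y j + 1/((m:ℝ)+1))
      nlinarith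
    have hTapp : Tendsto (fun m : ℕ => P.T (h • fun j => y j + 1/((m:ℝ)+1)) i) atTop
        (𝓝 (P.T (h • y) i)) :=
      ((continuous_apply i).tendsto _).comp
        ((P.cont _ (smul_nonneg hh.le hy0)).tendsto.comp
          (tendsto_nhdsWithin_iff.2 ⟨harg, Eventually.of_forall hargmem⟩))
    refine ge_of_tendsto (hTapp.div_const h) (Eventually.of_forall fun m => ?_)
    have hw0m : (0:Fin N → ℝ) ≤ fun j => y j + 1/((m:ℝ)+1) := by
      intro j
      have hyj : (0:ℝ) ≤ y j := hy0 j
      have h6 : (0:ℝ) < 1/((m:ℝ)+1) := by positivity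
      show (0:ℝ) ≤ y j + 1/((m:ℝ)+1)
      linarith
    exact le_trans (hA (1/((m:ℝ)+1)) (by positivity) i) (P.tinf_le hw0m hh i)
  refine ⟨y, hy0, hyne, fun i => ?_⟩
  exact ge_of_tendsto (P.lim y hy0 i)
    (eventually_atTop.2 ⟨1, fun h hh => hB h (by linarith) i⟩)

lemma Pack.exists_eigen (hN : 0 < N) {y : Fin N → ℝ} (hy0 : 0 ≤ y) (hyne : y ≠ 0)
    (hsub : y ≤ P.Tinf y) :
    ∃ (l : ℝ) (x : Fin N → ℝ), 1 ≤ l ∧ 0 ≤ x ∧ x ≠ 0 ∧ P.Tinf x = l • x := by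
  haveI : Nonempty (Fin N) := Fin.pos_iff_nonempty.1 hN
  obtain ⟨i₀⟩ := (inferInstance : Nonempty (Fin N))
  obtain ⟨j₀, hj₀⟩ := Pack.exists_pos hy0 hyne
  set M : ℝ := mx hN (P.Tinf fun _ => (1:ℝ)) with hMdef
  have hone0 : (0:Fin N → ℝ) ≤ fun _ => (1:ℝ) := fun _ => zero_le_one
  have hM0 : 0 ≤ M := by rw [hMdef]; exact mx_nonneg (P.tinf_nonneg hone0)
  have key : ∀ n : ℕ, ∃ (W : Fin N → ℝ) (lam : ℝ),
      (∀ i, 0 < W i) ∧ mx hN W = 1 ∧ 1 ≤ lam ∧ lam ≤ M + 1 ∧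
      ∀ i, P.Tinf W i + 1/((n:ℝ)+1) = lam * W i := by
    intro n
    have hδ : (0:ℝ) < 1/((n:ℝ)+1) := by positivity
    obtain ⟨w, lam, hw, hlam, heq⟩ :=
      exists_perturbed_eigen hN P.Tinf (fun x hx => P.tinf_nonneg hx)
        (fun x y hx hxy => P.tinf_mono hx hxy)
        (fun c hc x hx => P.tinf_smul hc hx) hδ
    have hw0 : (0:Fin N → ℝ) ≤ w := fun i => (hw i).le
    have hmw : 0 < mx hN w := lt_of_lt_of_le (hw i₀) (le_mx _ i₀)
    set W : Fin N → ℝ := (mx hN w)⁻¹ • w with hWdef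
    have hW0 : ∀ i, 0 < W i := fun i => mul_pos (inv_pos.2 hmw) (hw i)
    have hWmx : mx hN W = 1 := by
      rw [hWdef, mx_smul (inv_nonneg.2 hmw.le)]
      exact inv_mul_cancel₀ hmw.ne'
    have hTW : ∀ i, P.Tinf W i = (mx hN w)⁻¹ * P.Tinf w i := by
      intro i
      rw [hWdef, P.tinf_smul (inv_nonneg.2 hmw.le) hw0]
      simp [Pi.smul_apply, smul_eq_mul]
    have hWeq : ∀ i, P.Tinf W i + 1/((n:ℝ)+1) = lam * W i := by
      intro i
      have h2 : W i = (mx hN w)⁻¹ * w i := rfl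
      have h3 : lam * W i = (mx hN w)⁻¹ * (lam * w i) := by rw [h2]; ring
      rw [h3, ← heq i, hTW i]
      have h4 : (mx hN w)⁻¹ * mx hN w = 1 := inv_mul_cancel₀ hmw.ne'
      calc (mx hN w)⁻¹ * P.Tinf w i + 1/((n:ℝ)+1)
          = (mx hN w)⁻¹ * P.Tinf w i + 1/((n:ℝ)+1) * ((mx hN w)⁻¹ * mx hN w) := by
            rw [h4, mul_one]
        _ = (mx hN w)⁻¹ * (P.Tinf w i + 1/((n:ℝ)+1) * mx hN w) := by ring
    have hcw : 1 ≤ lam := by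
      obtain ⟨is, his⟩ := exists_mx (hN := hN) (fun k => y k / W k)
      set c : ℝ := mx hN (fun k => y k / W k) with hcdef
      have hc0 : 0 < c := by
        have h0 : 0 < y j₀ / W j₀ := div_pos hj₀ (hW0 j₀)
        rw [hcdef]; exact lt_of_lt_of_le h0 (le_mx (fun k => y k / W k) j₀)
      have hyc : y ≤ c • W := by
        intro k
        have h1 : y k / W k ≤ c := by rw [hcdef]; exact le_mx (fun k => y k / W k) k
        rw [Pi.smul_apply, smul_eq_mul]
        exact (div_le_iff₀ (hW0 k)).1 h1
      have hyis : y is = c * W is := by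
        have h5 : c = y is / W is := his
        rw [h5, div_mul_cancel₀ _ (hW0 is).ne']
      have h1 : P.Tinf y is ≤ c * P.Tinf W is := by
        have h6 := P.tinf_mono hy0 hyc is
        rwa [P.tinf_smul hc0.le (fun i => (hW0 i).le), Pi.smul_apply, smul_eq_mul] at h6
      have h2 : P.Tinf W is ≤ lam * W is := by
        have h7 := hWeq is
        linarith
      have h3 : y is ≤ lam * y is := by
        calc y is ≤ P.Tinf y is := hsub is
          _ ≤ c * P.Tinf W is := h1
          _ ≤ c * (lam * W is) := mul_le_mul_of_nonneg_left h2 hc0.le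
          _ = lam * y is := by rw [hyis]; ring
      have hyis0 : 0 < y is := by rw [hyis]; exact mul_pos hc0 (hW0 is)
      nlinarith
    have hub2 : lam ≤ M + 1 := by
      obtain ⟨im, him⟩ := exists_mx (hN := hN) W
      have hWim : W im = 1 := by rw [← him, hWmx]
      have hWle : W ≤ fun _ => (1:ℝ) := by
        intro k
        show W k ≤ 1
        rw [← hWmx]; exact le_mx _ k
      have h1 : P.Tinf W im ≤ M := by
        have h2 := P.tinf_mono (fun i => (hW0 i).le) hWle im
        refine le_trans h2 ?_
        rw [hMdef]; exact le_mx _ im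
      have h3 := hWeq im
      have hδ1 : 1/((n:ℝ)+1) ≤ 1 := by
        rw [div_le_one (by positivity)]
        linarith [Nat.cast_nonneg (α := ℝ) n]
      rw [hWim, mul_one] at h3
      have hTn := P.tinf_nonneg (fun i => (hW0 i).le) im
      linarith
    exact ⟨W, lam, hW0, hWmx, hcw, hub2, hWeq⟩
  choose Wn ln hW0 hWmx hln1 hlnM hWeq using key
  have hWmem : ∀ n, (Wn n, ln n) ∈
      (Set.Icc (0:Fin N → ℝ) (fun _ => (1:ℝ))) ×ˢ (Set.Icc (1:ℝ) (M+1)) := by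
    intro n
    refine ⟨⟨fun j => (hW0 n j).le, fun j => ?_⟩, hln1 n, hlnM n⟩
    show Wn n j ≤ 1
    rw [← hWmx n]; exact le_mx _ j
  obtain ⟨⟨x, l⟩, hmemK, φ, hφ, hconv⟩ :=
    ((isCompact_Icc).prod isCompact_Icc).tendsto_subseq hWmem
  have hx0 : 0 ≤ x := hmemK.1.1
  have hl1 : 1 ≤ l := hmemK.2.1
  have hWc : Tendsto (fun k => Wn (φ k)) atTop (𝓝 x) :=
    (continuous_fst.tendsto _).comp hconv
  have hlc : Tendsto (fun k => ln (φ k)) atTop (𝓝 l) :=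
    (continuous_snd.tendsto _).comp hconv
  have hδc : Tendsto (fun k => 1/((φ k : ℝ)+1)) atTop (𝓝 0) :=
    tendsto_one_div_add_atTop_nhds_zero_nat.comp hφ.tendsto_atTop
  have hxnorm : ‖x‖ = 1 := by
    have h1 : Tendsto (fun k => ‖Wn (φ k)‖) atTop (𝓝 ‖x‖) :=
      (continuous_norm.tendsto x).comp hWc
    have h2 : (fun k => ‖Wn (φ k)‖) = fun _ => (1:ℝ) := by
      funext k
      rw [norm_eq_mx (hN := hN) (fun j => (hW0 (φ k) j).le), hWmx]
    rw [h2] at h1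
    exact tendsto_nhds_unique h1 tendsto_const_nhds
  have hxne : x ≠ 0 := by
    intro h
    rw [h, norm_zero] at hxnorm
    norm_num at hxnorm
  have hLmul : ∀ i, Tendsto (fun k => ln (φ k) * Wn (φ k) i) atTop (𝓝 (l * x i)) :=
    fun i => hlc.mul (((continuous_apply i).tendsto x).comp hWc)
  have ha : ∀ i, l * x i ≤ P.Tinf x i := by
    intro i
    have hstep : ∀ h : ℝ, 0 < h → l * x i ≤ P.T (h • x) i / h := by
      intro h hh
      have harg : Tendsto (fun k => h • Wn (φ k)) atTop (𝓝 (h • x)) :=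
        ((continuous_const_smul h).tendsto x).comp hWc
      have hR : Tendsto (fun k => P.T (h • Wn (φ k)) i / h + 1/((φ k:ℝ)+1)) atTop
          (𝓝 (P.T (h • x) i / h + 0)) := by
        refine Tendsto.add ?_ hδc
        refine Tendsto.div_const ?_ h
        exact ((continuous_apply i).tendsto _).comp
          ((P.cont _ (smul_nonneg hh.le hx0)).tendsto.comp
            (tendsto_nhdsWithin_iff.2 ⟨harg, Eventually.of_forall fun k =>
              (show (0:Fin N → ℝ) ≤ h • Wn (φ k) from smul_nonneg hh.le fun j => (hW0 (φ k) j).le)⟩))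
      have hev : ∀ᶠ k in atTop, ln (φ k) * Wn (φ k) i ≤
          P.T (h • Wn (φ k)) i / h + 1/((φ k:ℝ)+1) := by
        refine Eventually.of_forall fun k => ?_
        have h1 := hWeq (φ k) i
        have h2 := P.tinf_le (x := Wn (φ k)) (fun j => (hW0 (φ k) j).le) hh i
        linarith
      have h3 := le_of_tendsto_of_tendsto (hLmul i) hR hev
      simpa using h3
    exact ge_of_tendsto (P.lim x hx0 i)
      (eventually_atTop.2 ⟨1, fun h hh => hstep h (by linarith)⟩)
  have hb : ∀ i, P.Tinf x i ≤ l * x i := by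
    intro i
    obtain ⟨jx, hjx⟩ := Pack.exists_pos hx0 hxne
    have hJne : (Finset.univ.filter fun j => 0 < x j).Nonempty :=
      ⟨jx, by simp [hjx]⟩
    set m : ℝ := (Finset.univ.filter fun j => 0 < x j).inf' hJne x with hm
    have hm0 : 0 < m := by
      rw [hm, Finset.lt_inf'_iff]
      intro j hj
      exact (Finset.mem_filter.1 hj).2
    have hmle : ∀ j, 0 < x j → m ≤ x j := by
      intro j hj
      rw [hm]
      exact Finset.inf'_le x (by simp [hj])
    have hstep : ∀ ε : ℝ, 0 < ε → ε < m → (1 - ε/m) * P.Tinf x i ≤ l * x i := by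
      intro ε hε hεm
      have hcoef0 : 0 ≤ 1 - ε/m := by
        have h5 : ε/m ≤ 1 := (div_le_one hm0).2 hεm.le
        linarith
      obtain ⟨K, hK⟩ := Metric.tendsto_atTop.1 hWc ε hε
      have hev : ∀ᶠ k in atTop, (1 - ε/m) * P.Tinf x i ≤ ln (φ k) * Wn (φ k) i := by
        refine eventually_atTop.2 ⟨K, fun k hk => ?_⟩
        have hdist := hK k hk
        have hge : (1 - ε/m) • x ≤ Wn (φ k) := by
          intro j
          rw [Pi.smul_apply, smul_eq_mul]
          rcases eq_or_lt_of_le (hx0 j) with hxj | hxj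
          · rw [show x j = 0 from hxj.symm, mul_zero]
            exact (hW0 (φ k) j).le
          · have h1 : dist (Wn (φ k) j) (x j) ≤ dist (Wn (φ k)) x := dist_le_pi_dist _ _ j
            rw [Real.dist_eq, abs_le] at h1
            have h2 : x j - ε ≤ Wn (φ k) j := by linarith [h1.1]
            have h3 : m ≤ x j := hmle j hxj
            have h4 : (1 - ε/m) * x j ≤ x j - ε := by
              have h5 : ε ≤ ε / m * x j := by
                rw [div_mul_eq_mul_div, le_div_iff₀ hm0]
                exact mul_le_mul_of_nonneg_left h3 hε.le
              nlinarith
            linarith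
        have h6 : (1 - ε/m) • P.Tinf x ≤ P.Tinf (Wn (φ k)) := by
          have h7 := P.tinf_mono (smul_nonneg hcoef0 hx0) hge
          rwa [P.tinf_smul hcoef0 hx0] at h7
        have h7 := h6 i
        rw [Pi.smul_apply, smul_eq_mul] at h7
        have h8 := hWeq (φ k) i
        have hδpos : (0:ℝ) < 1/((φ k:ℝ)+1) := by positivity
        linarith
      exact ge_of_tendsto (hLmul i) hev
    have hTn0 : 0 ≤ P.Tinf x i := P.tinf_nonneg hx0 i
    have hterms : ∀ q : ℕ, (1 - 1/((q:ℝ)+2)) * P.Tinf x i ≤ l * x i := by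
      intro q
      have hq2 : (0:ℝ) < (q:ℝ) + 2 := by positivity
      have hε : 0 < m/((q:ℝ)+2) := by positivity
      have hεm : m/((q:ℝ)+2) < m := by
        rw [div_lt_iff₀ hq2]
        nlinarith
      have := hstep (m/((q:ℝ)+2)) hε hεm
      have hcoefeq : (m/((q:ℝ)+2))/m = 1/((q:ℝ)+2) := by
        field_simp
      rwa [hcoefeq] at this
    have hcoeflim : Tendsto (fun q : ℕ => (1 - 1/((q:ℝ)+2)) * P.Tinf x i) atTop
        (𝓝 (P.Tinf x i)) := by
      have h1 : Tendsto (fun q : ℕ => 1/((q:ℝ)+2)) atTop (𝓝 0) := by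
        have h2 := (tendsto_one_div_add_atTop_nhds_zero_nat (𝕜 := ℝ)).comp (tendsto_add_atTop_nat 1)
        refine h2.congr fun q => ?_
        simp only [Function.comp_apply]
        push_cast
        rw [one_div]
        ring_nf
      have h3 : Tendsto (fun q : ℕ => 1 - 1/((q:ℝ)+2)) atTop (𝓝 1) := by
        simpa using tendsto_const_nhds.sub h1
      simpa using h3.mul_const (P.Tinf x i)
    exact le_of_tendsto hcoeflim (Eventually.of_forall hterms)
  refine ⟨l, x, hl1, hx0, hxne, funext fun i => ?_⟩
  rw [Pi.smul_apply, smul_eq_mul]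
  exact le_antisymm (hb i) (ha i)

end Stmt17

/-- A continuous SI mapping T has a fixed point if and only if
the spectral radius of its asymptotic mapping T_∞ is strictly less than one. -/
theorem stmt17 {N : ℕ} (T : (Fin N → ℝ) → (Fin N → ℝ))
    (hpos : ∀ x : Fin N → ℝ, 0 ≤ x → ∀ i, 0 < T x i)
    (hmono : ∀ x y : Fin N → ℝ, 0 ≤ x → x ≤ y → T x ≤ T y)
    (hscal : ∀ x : Fin N → ℝ, 0 ≤ x → ∀ α : ℝ, 1 < α → ∀ i, T (α • x) i < α * T x i)
    (hcont : ContinuousOn T {x : Fin N → ℝ | 0 ≤ x})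
    (Tinf : (Fin N → ℝ) → (Fin N → ℝ))
    (hTinf : ∀ x : Fin N → ℝ, 0 ≤ x → ∀ i,
      Tendsto (fun h : ℝ => T (h • x) i / h) atTop (nhds (Tinf x i))) :
    (∃ x : Fin N → ℝ, 0 ≤ x ∧ T x = x) ↔
      sSup {μ : ℝ | 0 ≤ μ ∧
        ∃ x : Fin N → ℝ, 0 ≤ x ∧ x ≠ 0 ∧ Tinf x = μ • x} < 1 := by
  rcases Nat.eq_zero_or_pos N with hN0 | hN
  · subst hN0
    constructor
    · intro _
      have hset : {μ : ℝ | 0 ≤ μ ∧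
          ∃ x : Fin 0 → ℝ, 0 ≤ x ∧ x ≠ 0 ∧ Tinf x = μ • x} = ∅ := by
        ext μ
        simp only [Set.mem_setOf_eq, Set.mem_empty_iff_false, iff_false, not_and]
        rintro - ⟨x, -, hxne, -⟩
        exact hxne (funext fun i => i.elim0)
      rw [hset, Real.sSup_empty]
      norm_num
    · intro _
      refine ⟨0, le_rfl, funext fun i => i.elim0⟩
  · let P : Stmt17.Pack N := ⟨T, Tinf, hpos, hmono, hscal, hcont, hTinf⟩
    constructor
    · rintro ⟨x, hx0, hfix⟩
      exact P.forward hN hx0 hfix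
    · intro hs
      by_cases hbdd : ∃ B : ℝ, ∀ k i, (T)^[k] (0:Fin N → ℝ) i ≤ B
      · obtain ⟨B, hB⟩ := hbdd
        exact P.fixed_of_bounded hB
      · exfalso
        push_neg at hbdd
        obtain ⟨y, hy0, hyne, hsub⟩ := P.subeig_of_unbounded hN hbdd
        obtain ⟨l, x, hl1, hx0, hxne, heig⟩ := P.exists_eigen hN hy0 hyne hsub
        have hlS : l ∈ {μ : ℝ | 0 ≤ μ ∧
            ∃ x : Fin N → ℝ, 0 ≤ x ∧ x ≠ 0 ∧ Tinf x = μ • x} :=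
          ⟨le_trans zero_le_one hl1, x, hx0, hxne, heig⟩
        have hbddS : BddAbove {μ : ℝ | 0 ≤ μ ∧
            ∃ x : Fin N → ℝ, 0 ≤ x ∧ x ≠ 0 ∧ Tinf x = μ • x} := by
          refine ⟨Stmt17.mx hN (P.Tinf fun _ => (1:ℝ)), ?_⟩
          rintro μ ⟨hμ0, z, hz0, hzne, hzeig⟩
          exact P.bddS hN hμ0 hz0 hzne hzeig
        have := le_csSup hbddS hlS
        linarith
end

section
/- Let ‖·‖ be a monotone norm on ℝ^N and T : ℝ^N_+ → ℝ^N_{++} a continuous SI mapping. Suppose (x⋆, λ⋆) ∈ ℝ^N_{++} × ℝ_{++} satisfies T(x⋆) = λ⋆ x⋆ and ‖x⋆‖ = 1. Then there exists x′ ∈ ℝ^N_+ with T(x′) = x′ and ‖x′‖ ≤ 1 if and only if λ⋆ ≤ 1. -/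
open Filter Topology

/-- Let T be a continuous SI mapping and ‖·‖ a monotone norm, and
let (x⋆, λ⋆) be the positive normalized eigenpair of T. Then T has a fixed
point x′ with ‖x′‖ ≤ 1 if and only if λ⋆ ≤ 1. -/
theorem stmt18 {N : ℕ} (T : (Fin N → ℝ) → (Fin N → ℝ))
    (hpos : ∀ x : Fin N → ℝ, 0 ≤ x → ∀ i, 0 < T x i)
    (hmono : ∀ x y : Fin N → ℝ, 0 ≤ x → x ≤ y → T x ≤ T y)
    (hscal : ∀ x : Fin N → ℝ, 0 ≤ x → ∀ α : ℝ, 1 < α → ∀ i, T (α • x) i < α * T x i)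
    (hcont : ContinuousOn T {x : Fin N → ℝ | 0 ≤ x})
    (ν : (Fin N → ℝ) → ℝ)
    (hν0 : ∀ x, ν x = 0 ↔ x = 0)
    (hνs : ∀ (a : ℝ) (x : Fin N → ℝ), ν (a • x) = |a| * ν x)
    (hνt : ∀ x y : Fin N → ℝ, ν (x + y) ≤ ν x + ν y)
    (hνm : ∀ x y : Fin N → ℝ, 0 ≤ x → x ≤ y → ν x ≤ ν y)
    (xs : Fin N → ℝ) (lams : ℝ) (hxs : ∀ i, 0 < xs i) (hlams : 0 < lams)
    (heig : T xs = lams • xs) (hns : ν xs = 1) :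
    (∃ x' : Fin N → ℝ, 0 ≤ x' ∧ T x' = x' ∧ ν x' ≤ 1) ↔ lams ≤ 1 := by
  rcases Nat.eq_zero_or_pos N with hN | hN
  · exfalso
    subst hN
    have h0 : ν xs = 0 := (hν0 xs).mpr (funext fun i => i.elim0)
    rw [hns] at h0
    exact one_ne_zero h0
  haveI : Nonempty (Fin N) := ⟨⟨0, hN⟩⟩
  have hxs0 : (0 : Fin N → ℝ) ≤ xs := fun i => (hxs i).le
  constructor
  · rintro ⟨x', hx0, hfix, hnx⟩
    have hx'pos : ∀ i, 0 < x' i := fun i => hfix ▸ hpos x' hx0 i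
    obtain ⟨i0, -, hi0⟩ :=
      Finset.exists_mem_eq_sup' (Finset.univ_nonempty (α := Fin N)) (fun i => xs i / x' i)
    set c := Finset.univ.sup' Finset.univ_nonempty (fun i => xs i / x' i) with hc
    have hcle : ∀ i, xs i ≤ c * x' i := by
      intro i
      have h1 : xs i / x' i ≤ c :=
        hc ▸ Finset.le_sup' (fun j => xs j / x' j) (Finset.mem_univ i)
      exact (div_le_iff₀ (hx'pos i)).mp h1
    rcases le_or_gt c 1 with hc1 | hc1
    · -- xs ≤ x', so λ • xs = T xs ≤ T x' = x', hence λ ≤ ν x' ≤ 1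
      have hxsx' : xs ≤ x' := by
        intro i
        have := hcle i
        nlinarith [hx'pos i]
      have hTle : T xs ≤ T x' := hmono xs x' hxs0 hxsx'
      rw [heig, hfix] at hTle
      have hsm0 : (0 : Fin N → ℝ) ≤ lams • xs := by
        intro i
        simp only [Pi.smul_apply, smul_eq_mul, Pi.zero_apply]
        exact mul_nonneg hlams.le (hxs i).le
      have h1 : ν (lams • xs) ≤ ν x' := hνm _ _ hsm0 hTle
      rw [hνs, hns, abs_of_pos hlams, mul_one] at h1
      linarith
    · -- c > 1 : scalability collapses c, giving λ < 1
      have hsc := hscal x' hx0 c hc1 i0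
      rw [hfix] at hsc
      have hm := hmono xs (c • x') hxs0 (fun i => by
        simpa [Pi.smul_apply, smul_eq_mul] using hcle i) i0
      rw [heig] at hm
      simp only [Pi.smul_apply, smul_eq_mul] at hm
      have hcx : c * x' i0 = xs i0 := by
        rw [hi0, div_mul_cancel₀ _ (hx'pos i0).ne']
      nlinarith [hxs i0]
  · intro hl
    have hTxs : T xs ≤ xs := by
      rw [heig]
      intro i
      simp only [Pi.smul_apply, smul_eq_mul]
      nlinarith [hxs i]
    set u : ℕ → (Fin N → ℝ) := fun n => T^[n] xs with hu
    have hu0 : ∀ n, (0 : Fin N → ℝ) ≤ u n := by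
      intro n
      induction n with
      | zero => exact hxs0
      | succ n ih =>
        intro i
        have h := (hpos (u n) ih i).le
        simpa [hu, Function.iterate_succ_apply'] using h
    have husucc : ∀ n, u (n + 1) ≤ u n := by
      intro n
      induction n with
      | zero => simpa [hu] using hTxs
      | succ n ih =>
        have h := hmono (u (n + 1)) (u n) (hu0 (n + 1)) ih
        simpa [hu, Function.iterate_succ_apply'] using h
    have hanti : ∀ i, Antitone (fun n => u n i) :=
      fun i => antitone_nat_of_succ_le (fun n => husucc n i)
    have hbdd : ∀ i, BddBelow (Set.range (fun n => u n i)) := by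
      intro i
      exact ⟨0, by rintro _ ⟨n, rfl⟩; exact hu0 n i⟩
    set x' : Fin N → ℝ := fun i => ⨅ n, u n i with hx'
    have hx'0 : (0 : Fin N → ℝ) ≤ x' := fun i => le_ciInf (fun n => hu0 n i)
    have htendi : ∀ i, Tendsto (fun n => u n i) atTop (𝓝 (x' i)) :=
      fun i => tendsto_atTop_ciInf (hanti i) (hbdd i)
    have htend : Tendsto u atTop (𝓝 x') := tendsto_pi_nhds.mpr htendi
    have htendS : Tendsto u atTop (𝓝[{x : Fin N → ℝ | 0 ≤ x}] x') :=
      tendsto_nhdsWithin_of_tendsto_nhds_of_eventually_within u htend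
        (Eventually.of_forall hu0)
    have hTt : Tendsto (fun n => T (u n)) atTop (𝓝 (T x')) :=
      ((hcont x' hx'0).tendsto).comp htendS
    have hshift : Tendsto (fun n => u (n + 1)) atTop (𝓝 x') :=
      htend.comp (tendsto_add_atTop_nat 1)
    have hEq : (fun n => T (u n)) = fun n => u (n + 1) := by
      funext n
      simp [hu, Function.iterate_succ_apply']
    rw [hEq] at hTt
    have hfix : T x' = x' := tendsto_nhds_unique hTt hshift
    have hle : x' ≤ xs := fun i => ciInf_le (hbdd i) 0
    exact ⟨x', hx'0, hfix, by
      calc ν x' ≤ ν xs := hνm _ _ hx'0 hle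
        _ = 1 := hns⟩
end

section
/- Fix M ∈ ℕ, positive constants B, K, σ² > 0, a power vector p ∈ ℝ^M_{++}, positive pathloss coefficients g_{k,j} > 0 and positive demands d_j > 0 for users j in a finite nonempty set N_i assigned to base station i ∈ {1,…,M}. Define the i-th load coupling coordinate function t⁽ⁱ⁾ : ℝ^M_+ → ℝ_{++} by t⁽ⁱ⁾(x) = Σ_{j∈N_i} d_j / ( K · B · log₂( 1 + p_i g_{i,j} / ( Σ_{k≠i} x_k p_k g_{k,j} + σ² ) ) ). Then for every x ∈ ℝ^M_+, lim_{h→∞} t⁽ⁱ⁾(hx)/h = Σ_{j∈N_i} ( (ln 2) d_j / (K B p_i g_{i,j}) ) · Σ_{k≠i} x_k p_k g_{k,j}; i.e., the asymptotic function of t⁽ⁱ⁾ is the linear function x ↦ Σ_{k≠i} [M]_{i,k} (p_k/p_i) x_k with [M]_{i,k} = Σ_{j∈N_i} (ln 2) d_j g_{k,j} / (K B g_{i,j}) for k ≠ i. -/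
open Filter Topology

/-- The asymptotic function of the i-th coordinate function of
the load coupling mapping is the linear function
x ↦ Σ_{j∈N_i} ((ln 2) d_j/(K B p_i g_{i,j})) Σ_{k≠i} x_k p_k g_{k,j}. -/
theorem stmt19 {M : ℕ} (i : Fin M) {J : Type} [Fintype J] [Nonempty J]
    (B K σ2 : ℝ) (hB : 0 < B) (hK : 0 < K) (hσ : 0 < σ2)
    (p : Fin M → ℝ) (hp : ∀ k, 0 < p k)
    (g : Fin M → J → ℝ) (hg : ∀ k j, 0 < g k j)
    (d : J → ℝ) (hd : ∀ j, 0 < d j)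
    (x : Fin M → ℝ) (hx : 0 ≤ x) :
    Tendsto (fun h : ℝ =>
        (∑ j : J, d j / (K * (B * Real.logb 2 (1 + p i * g i j /
          ((∑ k ∈ Finset.univ.erase i, (h • x) k * p k * g k j) + σ2))))) / h)
      atTop
      (nhds (∑ j : J, Real.log 2 * d j / (K * B * p i * g i j) *
        ∑ k ∈ Finset.univ.erase i, x k * p k * g k j)) := by
  simp only [Finset.sum_div]
  refine tendsto_finset_sum _ (fun j _ => ?_)
  have hxk : ∀ k, 0 ≤ x k := fun k => hx k
  set S : ℝ := ∑ k ∈ Finset.univ.erase i, x k * p k * g k j with hSdef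
  have hsum : ∀ h : ℝ,
      (∑ k ∈ Finset.univ.erase i, (h • x) k * p k * g k j) = h * S := by
    intro h
    rw [hSdef, Finset.mul_sum]
    refine Finset.sum_congr rfl fun k _ => ?_
    simp only [Pi.smul_apply, smul_eq_mul]; ring
  simp only [hsum]
  set a : ℝ := p i * g i j with hadef
  have ha : 0 < a := mul_pos (hp i) (hg i j)
  have hSnn : 0 ≤ S :=
    Finset.sum_nonneg fun k _ =>
      mul_nonneg (mul_nonneg (hxk k) (hp k).le) (hg k j).le
  rcases eq_or_lt_of_le hSnn with h0 | hSpos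
  · -- S = 0 : constant / h → 0
    simp only [← h0, mul_zero, zero_add]
    exact Tendsto.div_atTop tendsto_const_nhds tendsto_id
  · -- S > 0
    have hlog2 : (0:ℝ) < Real.log 2 := Real.log_pos one_lt_two
    -- denominator h*S+σ2 tends to atTop
    have hden : Tendsto (fun h : ℝ => h * S + σ2) atTop atTop :=
      tendsto_atTop_add_const_right _ σ2 (Tendsto.atTop_mul_const hSpos tendsto_id)
    -- ε h := a/(h*S+σ2) → 0
    have hε : Tendsto (fun h : ℝ => a / (h * S + σ2)) atTop (nhds 0) :=
      Tendsto.div_atTop tendsto_const_nhds hden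
    -- eventually positivity
    have hev : ∀ᶠ h : ℝ in atTop, 0 < h := eventually_gt_atTop 0
    have hεpos : ∀ᶠ h : ℝ in atTop, 0 < a / (h * S + σ2) := by
      filter_upwards [hev] with h hh
      exact div_pos ha (by positivity)
    -- slope of log at 1
    have hslope : Tendsto (fun y : ℝ => Real.log y / (y - 1)) (nhdsWithin 1 {(1:ℝ)}ᶜ)
        (nhds 1) := by
      have h1 := (Real.hasDerivAt_log one_ne_zero)
      rw [hasDerivAt_iff_tendsto_slope] at h1
      rw [inv_one] at h1
      refine h1.congr fun y => ?_
      rw [slope_def_field]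
      simp [Real.log_one]
    have hy : Tendsto (fun h : ℝ => 1 + a / (h * S + σ2)) atTop
        (nhdsWithin 1 {(1:ℝ)}ᶜ) := by
      rw [tendsto_nhdsWithin_iff]
      constructor
      · simpa using (tendsto_const_nhds.add hε)
      · filter_upwards [hεpos] with h hh
        simp only [Set.mem_compl_iff, Set.mem_singleton_iff]
        nlinarith
    have hcomp : Tendsto (fun h : ℝ =>
        Real.log (1 + a / (h * S + σ2)) / (a / (h * S + σ2))) atTop (nhds 1) := by
      refine (hslope.comp hy).congr fun h => ?_
      simp [Function.comp, add_sub_cancel_left]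
    -- h * ε h → a / S
    have hhe : Tendsto (fun h : ℝ => h * (a / (h * S + σ2))) atTop (nhds (a / S)) := by
      have h1 : Tendsto (fun h : ℝ => a / (S + σ2 / h)) atTop (nhds (a / S)) := by
        have h2 : Tendsto (fun h : ℝ => S + σ2 / h) atTop (nhds (S + 0)) :=
          tendsto_const_nhds.add (Tendsto.div_atTop tendsto_const_nhds tendsto_id)
        rw [add_zero] at h2
        exact tendsto_const_nhds.div h2 hSpos.ne'
      refine Tendsto.congr' ?_ h1
      filter_upwards [hev] with h hh
      have hd2 : (0:ℝ) < h * S + σ2 := by positivity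
      field_simp
    -- h * log(1+ε h) → a / S
    have hden2 : Tendsto (fun h : ℝ => h * Real.log (1 + a / (h * S + σ2))) atTop
        (nhds (a / S)) := by
      have := hcomp.mul hhe
      rw [one_mul] at this
      refine Tendsto.congr' ?_ this
      filter_upwards [hev] with h hh
      have hpos : 0 < h * S + σ2 := by positivity
      field_simp
    -- final
    have hmain : Tendsto (fun h : ℝ =>
        d j * Real.log 2 / (K * B * (h * Real.log (1 + a / (h * S + σ2))))) atTop
        (nhds (d j * Real.log 2 / (K * B * (a / S)))) := by
      refine tendsto_const_nhds.div ((tendsto_const_nhds.mul hden2)) ?_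
      positivity
    have hval : d j * Real.log 2 / (K * B * (a / S)) =
        Real.log 2 * d j / (K * B * p i * g i j) * S := by
      have hpi := hp i
      have hgi := hg i j
      rw [hadef]
      field_simp
    rw [← hval]
    refine Tendsto.congr' ?_ hmain
    filter_upwards [hεpos, hev] with h hε hh
    have hL : 0 < Real.log (1 + a / (h * S + σ2)) :=
      Real.log_pos (by linarith)
    rw [Real.logb, div_div, div_eq_div_iff (by positivity) (by positivity)]
    field_simp [hlog2.ne']
end
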